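/- Let d be a function on S_n × S_n satisfying: (1) d is a metric, (2) d is left-invariant, (3) d(π,σ) = d(π,ω) + d(ω,σ) if and only if ω is between π and σ, and (4) the smallest positive distance is 1. Then for any permutation γ, d(γ, e) equals the minimum number of adjacent transpositions needed to transform γ into the identity e. -/

import Mathlib

open Equiv Finset

/-- The adjacent transposition swapping positions `i` and `i+1` (0-indexed);
identity if out of range. -/
def adjSwap (n i : ℕ) : Equiv.Perm (Fin n) :=
  if h : i + 1 < n then Equiv.swap ⟨i, Nat.lt_of_succ_lt h⟩ ⟨i + 1, h⟩ else 1

/-- `ω` is between `π` and `σ`: on every pair `{a,b}`, `ω` agrees with `π` or with `σ`. -/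
def Between {n : ℕ} (π ω σ : Equiv.Perm (Fin n)) : Prop :=
  ∀ a b : Fin n, (π⁻¹ a < π⁻¹ b ↔ ω⁻¹ a < ω⁻¹ b) ∨ (σ⁻¹ a < σ⁻¹ b ↔ ω⁻¹ a < ω⁻¹ b)

/-- Kendall tau distance: minimum number of adjacent transpositions transforming `π` into `σ`. -/
noncomputable def kendall {n : ℕ} (π σ : Equiv.Perm (Fin n)) : ℕ :=
  sInf {s | ∃ l : List ℕ, (∀ i ∈ l, i + 1 < n) ∧
    σ = π * (l.map (adjSwap n)).prod ∧ l.length = s}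

/-- The set of inversions between `π` and `σ` (each unordered pair `{i,j}` of disagreement
is recorded as the ordered pair `(i,j)` with `i` ranked before `j` by `π`). -/
def invSet {n : ℕ} (π σ : Equiv.Perm (Fin n)) : Finset (Fin n × Fin n) :=
  Finset.univ.filter fun p => π⁻¹ p.1 < π⁻¹ p.2 ∧ σ⁻¹ p.2 < σ⁻¹ p.1

/-- Elements `j` on whose relative order with `i` the permutations `π` and `σ` disagree. -/
def invWith {n : ℕ} (π σ : Equiv.Perm (Fin n)) (i : Fin n) : Finset (Fin n) :=
  Finset.univ.filter fun j => ¬(π⁻¹ i < π⁻¹ j ↔ σ⁻¹ i < σ⁻¹ j)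

/-- Weighted Kendall distance for weight function `φ` on adjacent transpositions
(`φ h` is the weight of swapping positions `h, h+1`, 0-indexed). -/
noncomputable def wKendall {n : ℕ} (φ : ℕ → ℝ) (π σ : Equiv.Perm (Fin n)) : ℝ :=
  sInf {w | ∃ l : List ℕ, (∀ i ∈ l, i + 1 < n) ∧
    σ = π * (l.map (adjSwap n)).prod ∧ (l.map φ).sum = w}

/-- `w(k:l)`: sum of adjacent-transposition weights between positions `min k l` and `max k l - 1`. -/
def wsum (φ : ℕ → ℝ) (k l : ℕ) : ℝ := ∑ h ∈ Finset.Ico (min k l) (max k l), φ h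

/-- The generalized (weighted) Spearman footrule `D_φ`. -/
noncomputable def DKendall {n : ℕ} (φ : ℕ → ℝ) (π σ : Equiv.Perm (Fin n)) : ℝ :=
  ∑ i : Fin n, wsum φ ((π⁻¹ i : Fin n) : ℕ) ((σ⁻¹ i : Fin n) : ℕ)

/-- Weighted transposition distance with weight function `φ` on transpositions. -/
noncomputable def wTrans {n : ℕ} (φ : Fin n → Fin n → ℝ) (π σ : Equiv.Perm (Fin n)) : ℝ :=
  sInf {w | ∃ l : List (Fin n × Fin n), (∀ p ∈ l, p.1 ≠ p.2) ∧
    σ = π * (l.map fun p => Equiv.swap p.1 p.2).prod ∧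
    (l.map fun p => φ p.1 p.2).sum = w}

/-- Weight of a path (as a list of vertices) in the complete graph `K_φ`. -/
def pathWt {n : ℕ} (φ : Fin n → Fin n → ℝ) (p : List (Fin n)) : ℝ :=
  ((p.zip p.tail).map fun q => φ q.1 q.2).sum

/-- `p` is a path from `a` to `b` (consecutive vertices distinct). -/
def IsPath {n : ℕ} (p : List (Fin n)) (a b : Fin n) : Prop :=
  p.head? = some a ∧ p.getLast? = some b ∧ p.Chain' (· ≠ ·)

/-- Minimum weight of a path from `a` to `b` in `K_φ`. -/
noncomputable def minPathWt {n : ℕ} (φ : Fin n → Fin n → ℝ) (a b : Fin n) : ℝ :=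
  sInf {w | ∃ p : List (Fin n), IsPath p a b ∧ pathWt φ p = w}

/-- The footrule-type lower/upper bounding function `D_φ` for transposition weights. -/
noncomputable def DTrans {n : ℕ} (φ : Fin n → Fin n → ℝ) (π σ : Equiv.Perm (Fin n)) : ℝ :=
  ∑ i : Fin n, minPathWt φ (π⁻¹ i) (σ⁻¹ i)

namespace KAux

lemma adjSwap_eq {n i : ℕ} (h : i + 1 < n) :
    adjSwap n i = Equiv.swap ⟨i, Nat.lt_of_succ_lt h⟩ ⟨i + 1, h⟩ := by
  simp only [adjSwap, dif_pos h]

lemma adjSwap_inv {n i : ℕ} : (adjSwap n i)⁻¹ = adjSwap n i := by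
  unfold adjSwap; split_ifs <;> simp

lemma adjSwap_mul_self {n i : ℕ} : adjSwap n i * adjSwap n i = 1 := by
  unfold adjSwap; split_ifs <;> simp

lemma ordLem {n i : ℕ} (h : i + 1 < n) {x y : Fin n} (hxy : x < y) :
    adjSwap n i x < adjSwap n i y ∨ ((x : ℕ) = i ∧ (y : ℕ) = i + 1) := by
  have hxy' : (x : ℕ) < (y : ℕ) := hxy
  rw [adjSwap_eq h]
  simp only [Equiv.swap_apply_def]
  split_ifs <;> (simp only [Fin.ext_iff, Fin.lt_def] at *) <;> omega

lemma adjSwap_val {n i : ℕ} (h : i + 1 < n) (x : Fin n) :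
    ((adjSwap n i x : Fin n) : ℕ) =
      if (x : ℕ) = i then i + 1 else if (x : ℕ) = i + 1 then i else x := by
  rw [adjSwap_eq h]
  simp only [Equiv.swap_apply_def]
  split_ifs <;> simp_all [Fin.ext_iff]

lemma mem_invSet_one {n : ℕ} {γ : Perm (Fin n)} {p : Fin n × Fin n} :
    p ∈ invSet 1 γ ↔ p.1 < p.2 ∧ γ⁻¹ p.2 < γ⁻¹ p.1 := by
  simp [invSet]

lemma invSet_one {n : ℕ} : invSet (1 : Perm (Fin n)) 1 = ∅ := by
  ext p
  simp only [mem_invSet_one, Finset.notMem_empty, iff_false, not_and]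
  intro h1 h2
  exact absurd h2 (asymm h1)

lemma between_of {n : ℕ} {ω γ : Perm (Fin n)}
    (H : ∀ a b : Fin n, a < b → ω⁻¹ b < ω⁻¹ a → γ⁻¹ b < γ⁻¹ a) : Between 1 ω γ := by
  intro a b
  simp only [inv_one, Equiv.Perm.one_apply]
  rcases lt_trichotomy a b with hab | hab | hab
  · rcases lt_trichotomy (ω⁻¹ a) (ω⁻¹ b) with hw | hw | hw
    · exact Or.inl (iff_of_true hab hw)
    · exact absurd (ω⁻¹.injective hw) (ne_of_lt hab)
    · exact Or.inr (iff_of_false (asymm (H a b hab hw)) (asymm hw))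
  · subst hab
    exact Or.inl (iff_of_false (lt_irrefl a) (lt_irrefl _))
  · rcases lt_trichotomy (ω⁻¹ a) (ω⁻¹ b) with hw | hw | hw
    · exact Or.inr (iff_of_true (H b a hab hw) hw)
    · exact absurd (ω⁻¹.injective hw) (ne_of_gt hab)
    · exact Or.inl (iff_of_false (asymm hab) (asymm hw))

lemma between_gen {n j : ℕ} (hj : j + 1 < n) {X : Perm (Fin n)}
    (hX : X⁻¹ ⟨j + 1, hj⟩ < X⁻¹ ⟨j, Nat.lt_of_succ_lt hj⟩) :
    Between 1 (adjSwap n j) X := by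
  apply between_of
  intro a b hab h2
  rw [adjSwap_inv] at h2
  rcases ordLem hj hab with h3 | ⟨ha, hb⟩
  · exact absurd h2 (asymm h3)
  · have ha' : a = (⟨j, Nat.lt_of_succ_lt hj⟩ : Fin n) := Fin.ext ha
    have hb' : b = (⟨j + 1, hj⟩ : Fin n) := Fin.ext hb
    rw [ha', hb']
    exact hX

lemma between_step {n : ℕ} (γ : Perm (Fin n)) {i : ℕ} (h : i + 1 < n)
    (hd : γ ⟨i + 1, h⟩ < γ ⟨i, Nat.lt_of_succ_lt h⟩) :
    Between 1 (γ * adjSwap n i) γ := by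
  apply between_of
  intro a b hab h2
  have hinv : ∀ x, (γ * adjSwap n i)⁻¹ x = adjSwap n i (γ⁻¹ x) := by
    intro x
    rw [mul_inv_rev, Equiv.Perm.mul_apply, adjSwap_inv]
  rw [hinv, hinv] at h2
  by_contra hcon
  have hne : γ⁻¹ a ≠ γ⁻¹ b := fun hh => absurd (γ⁻¹.injective hh) (ne_of_lt hab)
  have hlt : γ⁻¹ a < γ⁻¹ b := lt_of_le_of_ne (le_of_not_gt hcon) hne
  rcases ordLem h hlt with h3 | ⟨ha, hb⟩
  · exact absurd h2 (asymm h3)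
  · have ha' : a = γ ⟨i, Nat.lt_of_succ_lt h⟩ := by
      rw [← Fin.ext ha (b := (⟨i, Nat.lt_of_succ_lt h⟩ : Fin n))]
      exact (Equiv.apply_symm_apply γ a).symm
    have hb' : b = γ ⟨i + 1, h⟩ := by
      rw [← Fin.ext hb (b := (⟨i + 1, h⟩ : Fin n))]
      exact (Equiv.apply_symm_apply γ b).symm
    rw [ha', hb'] at hab
    exact absurd hab (asymm hd)

lemma exists_descent {n : ℕ} {γ : Perm (Fin n)} (hγ : γ ≠ 1) :
    ∃ i : ℕ, ∃ hi : i + 1 < n, γ ⟨i + 1, hi⟩ < γ ⟨i, Nat.lt_of_succ_lt hi⟩ := by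
  by_contra hcon
  push_neg at hcon
  have hstep : ∀ i : ℕ, ∀ hi : i + 1 < n, γ ⟨i, Nat.lt_of_succ_lt hi⟩ < γ ⟨i + 1, hi⟩ := by
    intro i hi
    refine lt_of_le_of_ne (hcon i hi) ?_
    intro hh
    have := γ.injective hh
    simp [Fin.ext_iff] at this
  have mono : ∀ k : ℕ, ∀ hk : k < n, ∀ j : ℕ, ∀ hj : j < n, j < k →
      γ ⟨j, hj⟩ < γ ⟨k, hk⟩ := by
    intro k
    induction k with
    | zero => intro _ _ _ h; omega
    | succ m ih =>
      intro hk j hj hjk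
      rcases Nat.lt_or_ge j m with hjm | hjm
      · exact lt_trans (ih (by omega) j hj hjm) (hstep m hk)
      · have : j = m := by omega
        subst this
        exact hstep j hk
  have hsm : StrictMono γ := by
    intro a b hab
    have := mono b.val b.isLt a.val a.isLt hab
    simpa using this
  have hsm' : StrictMono (⇑(γ⁻¹) : Fin n → Fin n) := by
    intro a b hab
    by_contra hcon2
    have h1 : γ⁻¹ b ≤ γ⁻¹ a := le_of_not_gt hcon2
    have h2 : b ≤ a := by
      have := hsm.le_iff_le.mpr h1
      simpa using this
    exact absurd hab (not_lt_of_ge h2)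
  have hle : ∀ (f : Perm (Fin n)), StrictMono (f : Fin n → Fin n) →
      ∀ k : ℕ, ∀ hk : k < n, k ≤ ((f ⟨k, hk⟩ : Fin n) : ℕ) := by
    intro f hf k
    induction k with
    | zero => intro _; omega
    | succ m ih =>
      intro hk
      have h1 : f ⟨m, by omega⟩ < f ⟨m + 1, hk⟩ := hf (by simp [Fin.lt_def])
      have h2 := ih (by omega)
      have : ((f ⟨m, by omega⟩ : Fin n) : ℕ) < ((f ⟨m + 1, hk⟩ : Fin n) : ℕ) := h1
      omega
  apply hγ
  ext x
  have h1 : (x : ℕ) ≤ ((γ x : Fin n) : ℕ) := by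
    have := hle γ hsm x.val x.isLt
    simpa using this
  have h2 : ((γ x : Fin n) : ℕ) ≤ (x : ℕ) := by
    have := hle γ⁻¹ hsm' (γ x).val (γ x).isLt
    simp only [Fin.eta] at this
    rw [Equiv.Perm.inv_def, Equiv.symm_apply_apply] at this
    exact this
  simp only [Equiv.Perm.one_apply]
  omega

lemma invSet_mul_subset {n : ℕ} (β : Perm (Fin n)) {i : ℕ} (h : i + 1 < n) :
    invSet 1 (β * adjSwap n i) ⊆
      insert (β ⟨i, Nat.lt_of_succ_lt h⟩, β ⟨i + 1, h⟩) (invSet 1 β) := by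
  intro p hp
  rw [mem_invSet_one] at hp
  obtain ⟨h1, h2⟩ := hp
  have hinv : ∀ x, (β * adjSwap n i)⁻¹ x = adjSwap n i (β⁻¹ x) := by
    intro x
    rw [mul_inv_rev, Equiv.Perm.mul_apply, adjSwap_inv]
  rw [hinv, hinv] at h2
  have hne : β⁻¹ p.1 ≠ β⁻¹ p.2 := fun hh => absurd (β⁻¹.injective hh) (ne_of_lt h1)
  rcases lt_or_gt_of_ne hne with hlt | hgt
  · rcases ordLem h hlt with h3 | ⟨ha, hb⟩
    · exact absurd h2 (asymm h3)
    · apply Finset.mem_insert.mpr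
      left
      have ha' : p.1 = β ⟨i, Nat.lt_of_succ_lt h⟩ := by
        rw [← Fin.ext ha (b := (⟨i, Nat.lt_of_succ_lt h⟩ : Fin n))]
        exact (Equiv.apply_symm_apply β p.1).symm
      have hb' : p.2 = β ⟨i + 1, h⟩ := by
        rw [← Fin.ext hb (b := (⟨i + 1, h⟩ : Fin n))]
        exact (Equiv.apply_symm_apply β p.2).symm
      exact Prod.ext ha' hb'
  · exact Finset.mem_insert.mpr (Or.inr (mem_invSet_one.mpr ⟨h1, hgt⟩))

lemma invSet_step {n : ℕ} (γ : Perm (Fin n)) {i : ℕ} (h : i + 1 < n)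
    (hd : γ ⟨i + 1, h⟩ < γ ⟨i, Nat.lt_of_succ_lt h⟩) :
    invSet 1 (γ * adjSwap n i) =
      (invSet 1 γ).erase (γ ⟨i + 1, h⟩, γ ⟨i, Nat.lt_of_succ_lt h⟩) ∧
    (γ ⟨i + 1, h⟩, γ ⟨i, Nat.lt_of_succ_lt h⟩) ∈ invSet 1 γ := by
  have hinv : ∀ x, (γ * adjSwap n i)⁻¹ x = adjSwap n i (γ⁻¹ x) := by
    intro x
    rw [mul_inv_rev, Equiv.Perm.mul_apply, adjSwap_inv]
  have hmem : (γ ⟨i + 1, h⟩, γ ⟨i, Nat.lt_of_succ_lt h⟩) ∈ invSet 1 γ := by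
    rw [mem_invSet_one]
    refine ⟨hd, ?_⟩
    simp only [Equiv.Perm.inv_def, Equiv.symm_apply_apply]
    exact Fin.mk_lt_mk.mpr (Nat.lt_succ_self i)
  refine ⟨?_, hmem⟩
  ext p
  rw [Finset.mem_erase, mem_invSet_one, mem_invSet_one]
  constructor
  · rintro ⟨h1, h2⟩
    rw [hinv, hinv] at h2
    have hne : γ⁻¹ p.1 ≠ γ⁻¹ p.2 := fun hh => absurd (γ⁻¹.injective hh) (ne_of_lt h1)
    have key : γ⁻¹ p.2 < γ⁻¹ p.1 := by
      rcases lt_or_gt_of_ne hne with hlt | hgt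
      · rcases ordLem h hlt with h3 | ⟨ha, hb⟩
        · exact absurd h2 (asymm h3)
        · exfalso
          have ha' : p.1 = γ ⟨i, Nat.lt_of_succ_lt h⟩ := by
            rw [← Fin.ext ha (b := (⟨i, Nat.lt_of_succ_lt h⟩ : Fin n))]
            exact (Equiv.apply_symm_apply γ p.1).symm
          have hb' : p.2 = γ ⟨i + 1, h⟩ := by
            rw [← Fin.ext hb (b := (⟨i + 1, h⟩ : Fin n))]
            exact (Equiv.apply_symm_apply γ p.2).symm
          rw [ha', hb'] at h1
          exact absurd h1 (asymm hd)
      · exact hgt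
    refine ⟨?_, h1, key⟩
    intro hp
    rw [hp] at h2
    simp only [Equiv.Perm.inv_def, Equiv.symm_apply_apply] at h2
    rw [adjSwap_eq h, Equiv.swap_apply_left, Equiv.swap_apply_right] at h2
    exact absurd h2 (by simp [Fin.lt_def])
  · rintro ⟨hne, h1, h2⟩
    refine ⟨h1, ?_⟩
    rw [hinv, hinv]
    rcases ordLem h h2 with h3 | ⟨ha, hb⟩
    · exact h3
    · exfalso
      apply hne
      have ha' : p.2 = γ ⟨i, Nat.lt_of_succ_lt h⟩ := by
        rw [← Fin.ext ha (b := (⟨i, Nat.lt_of_succ_lt h⟩ : Fin n))]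
        exact (Equiv.apply_symm_apply γ p.2).symm
      have hb' : p.1 = γ ⟨i + 1, h⟩ := by
        rw [← Fin.ext hb (b := (⟨i + 1, h⟩ : Fin n))]
        exact (Equiv.apply_symm_apply γ p.1).symm
      exact Prod.ext hb' ha'

lemma invSet_card_step {n : ℕ} (γ : Perm (Fin n)) {i : ℕ} (h : i + 1 < n)
    (hd : γ ⟨i + 1, h⟩ < γ ⟨i, Nat.lt_of_succ_lt h⟩) :
    (invSet 1 (γ * adjSwap n i)).card + 1 = (invSet 1 γ).card := by
  obtain ⟨hset, hmem⟩ := invSet_step γ h hd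
  rw [hset, Finset.card_erase_of_mem hmem]
  have : 0 < (invSet 1 γ).card := Finset.card_pos.mpr ⟨_, hmem⟩
  omega

lemma card_le_of_word {n : ℕ} (l : List ℕ) (hv : ∀ i ∈ l, i + 1 < n) :
    (invSet 1 ((l.map (adjSwap n)).prod)).card ≤ l.length := by
  induction l using List.reverseRecOn with
  | nil => simp [invSet_one]
  | append_singleton l i ih =>
    have hi : i + 1 < n := hv i (by simp)
    have hv' : ∀ j ∈ l, j + 1 < n := fun j hj => hv j (by simp [hj])
    rw [List.map_append, List.prod_append]
    simp only [List.map_cons, List.map_nil, List.prod_cons, List.prod_nil, mul_one,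
      List.length_append, List.length_cons, List.length_nil]
    set β := (l.map (adjSwap n)).prod with hβ
    calc (invSet 1 (β * adjSwap n i)).card
        ≤ (insert (β ⟨i, Nat.lt_of_succ_lt hi⟩, β ⟨i + 1, hi⟩) (invSet 1 β)).card :=
          Finset.card_le_card (invSet_mul_subset β hi)
      _ ≤ (invSet 1 β).card + 1 := Finset.card_insert_le _ _
      _ ≤ l.length + 1 := by
          have := ih hv'
          omega
      _ = l.length + (0 + 1) := by omega

lemma word_exists {n : ℕ} : ∀ N : ℕ, ∀ γ : Perm (Fin n), (invSet 1 γ).card = N →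
    ∃ l : List ℕ, (∀ i ∈ l, i + 1 < n) ∧ γ = (l.map (adjSwap n)).prod ∧ l.length = N := by
  intro N
  induction N using Nat.strong_induction_on with
  | _ N ih =>
    intro γ hN
    by_cases hγ : γ = 1
    · subst hγ
      rw [invSet_one, Finset.card_empty] at hN
      exact ⟨[], by simp, by simp, by simp [← hN]⟩
    · obtain ⟨i, hi, hd⟩ := exists_descent hγ
      have hcard := invSet_card_step γ hi hd
      rw [hN] at hcard
      have hlt : (invSet 1 (γ * adjSwap n i)).card < N := by omega
      obtain ⟨l, hlv, hlp, hll⟩ := ih _ hlt (γ * adjSwap n i) rfl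
      refine ⟨l ++ [i], ?_, ?_, ?_⟩
      · intro j hj
        rcases List.mem_append.mp hj with hj | hj
        · exact hlv j hj
        · simp at hj; omega
      · rw [List.map_append, List.prod_append]
        simp only [List.map_cons, List.map_nil, List.prod_cons, List.prod_nil, mul_one]
        rw [← hlp, mul_assoc, adjSwap_mul_self, mul_one]
      · simp [hll]; omega

lemma prod_reverse_adj {n : ℕ} (l : List ℕ) :
    ((l.reverse.map (adjSwap n)).prod) = ((l.map (adjSwap n)).prod)⁻¹ := by
  induction l with
  | nil => simp
  | cons x l ih =>
    rw [List.reverse_cons, List.map_append, List.prod_append, ih]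
    simp only [List.map_cons, List.map_nil, List.prod_cons, List.prod_nil, mul_one]
    rw [mul_inv_rev, adjSwap_inv]

lemma kendall_set_eq {n : ℕ} (γ : Perm (Fin n)) :
    {s | ∃ l : List ℕ, (∀ i ∈ l, i + 1 < n) ∧
      (1 : Perm (Fin n)) = γ * (l.map (adjSwap n)).prod ∧ l.length = s} =
    {s | ∃ l : List ℕ, (∀ i ∈ l, i + 1 < n) ∧
      γ = (l.map (adjSwap n)).prod ∧ l.length = s} := by
  ext s
  constructor
  · rintro ⟨l, hv, he, hs⟩
    refine ⟨l.reverse, fun i hi => hv i (List.mem_reverse.mp hi), ?_, by simp [hs]⟩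
    rw [prod_reverse_adj]
    exact eq_inv_of_mul_eq_one_left he.symm
  · rintro ⟨l, hv, he, hs⟩
    refine ⟨l.reverse, fun i hi => hv i (List.mem_reverse.mp hi), ?_, by simp [hs]⟩
    rw [prod_reverse_adj, ← he]
    simp

lemma kendall_one_eq {n : ℕ} (γ : Perm (Fin n)) :
    kendall γ 1 = (invSet 1 γ).card := by
  rw [kendall, kendall_set_eq]
  obtain ⟨l, hv, he, hl⟩ := word_exists (invSet 1 γ).card γ rfl
  have hmem : (invSet 1 γ).card ∈ {s | ∃ l : List ℕ, (∀ i ∈ l, i + 1 < n) ∧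
      γ = (l.map (adjSwap n)).prod ∧ l.length = s} := ⟨l, hv, he, hl⟩
  apply le_antisymm (Nat.sInf_le hmem)
  obtain ⟨l', hv', he', hl'⟩ := Nat.sInf_mem (⟨_, hmem⟩ : Set.Nonempty _)
  rw [← hl', he']
  exact card_le_of_word l' hv'

lemma braid {n i : ℕ} (h : i + 2 < n) :
    adjSwap n i * adjSwap n (i + 1) * adjSwap n i =
    adjSwap n (i + 1) * adjSwap n i * adjSwap n (i + 1) := by
  have h1 : i + 1 < n := by omega
  have h2 : (i + 1) + 1 < n := by omega
  rw [adjSwap_eq h1, adjSwap_eq h2]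
  set a : Fin n := ⟨i, by omega⟩
  set b : Fin n := ⟨i + 1, by omega⟩
  set c : Fin n := ⟨i + 1 + 1, by omega⟩
  have hab : a ≠ b := by simp [a, b, Fin.ext_iff]
  have hbc : b ≠ c := by simp [b, c, Fin.ext_iff]
  have hac : a ≠ c := by simp [a, c, Fin.ext_iff]; omega
  have e1 : Equiv.swap a b * Equiv.swap b c * Equiv.swap a b = Equiv.swap a c := by
    rw [swap_comm a b, swap_comm b c]
    exact Equiv.swap_mul_swap_mul_swap hbc.symm hac.symm
  have e2 : Equiv.swap b c * Equiv.swap a b * Equiv.swap b c = Equiv.swap c a :=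
    Equiv.swap_mul_swap_mul_swap hab hac
  rw [e1, e2, swap_comm]

lemma adjSwap_mk {n i k : ℕ} (h : i + 1 < n) (hk : k < n) :
    adjSwap n i ⟨k, hk⟩ =
      ⟨if k = i then i + 1 else if k = i + 1 then i else k, by split_ifs <;> omega⟩ := by
  apply Fin.ext
  rw [adjSwap_val h]

lemma factA1 {n i : ℕ} (h1 : i + 1 < n) (h2 : i + 1 + 1 < n) :
    (adjSwap n i * adjSwap n (i + 1) * adjSwap n i)⁻¹ ⟨i + 1, h1⟩ <
    (adjSwap n i * adjSwap n (i + 1) * adjSwap n i)⁻¹ ⟨i, Nat.lt_of_succ_lt h1⟩ := by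
  simp only [mul_inv_rev, adjSwap_inv, Equiv.Perm.mul_apply, adjSwap_mk h1, adjSwap_mk h2,
    Fin.mk_lt_mk]
  split_ifs <;> omega

lemma factA2 {n i : ℕ} (h1 : i + 1 < n) (h2 : i + 1 + 1 < n) :
    (adjSwap n (i + 1) * adjSwap n i)⁻¹ ⟨i + 1 + 1, h2⟩ <
    (adjSwap n (i + 1) * adjSwap n i)⁻¹ ⟨i + 1, Nat.lt_of_succ_lt h2⟩ := by
  simp only [mul_inv_rev, adjSwap_inv, Equiv.Perm.mul_apply, adjSwap_mk h1, adjSwap_mk h2,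
    Fin.mk_lt_mk]
  split_ifs <;> omega

lemma factB1 {n i : ℕ} (h1 : i + 1 < n) (h2 : i + 1 + 1 < n) :
    (adjSwap n (i + 1) * adjSwap n i * adjSwap n (i + 1))⁻¹ ⟨i + 1 + 1, h2⟩ <
    (adjSwap n (i + 1) * adjSwap n i * adjSwap n (i + 1))⁻¹ ⟨i + 1, Nat.lt_of_succ_lt h2⟩ := by
  simp only [mul_inv_rev, adjSwap_inv, Equiv.Perm.mul_apply, adjSwap_mk h1, adjSwap_mk h2,
    Fin.mk_lt_mk]
  split_ifs <;> omega

lemma factB2 {n i : ℕ} (h1 : i + 1 < n) (h2 : i + 1 + 1 < n) :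
    (adjSwap n i * adjSwap n (i + 1))⁻¹ ⟨i + 1, h1⟩ <
    (adjSwap n i * adjSwap n (i + 1))⁻¹ ⟨i, Nat.lt_of_succ_lt h1⟩ := by
  simp only [mul_inv_rev, adjSwap_inv, Equiv.Perm.mul_apply, adjSwap_mk h1, adjSwap_mk h2,
    Fin.mk_lt_mk]
  split_ifs <;> omega

end KAux

theorem stmt1 (n : ℕ) (d : Equiv.Perm (Fin n) → Equiv.Perm (Fin n) → ℝ)
    (h_nonneg : ∀ π σ, 0 ≤ d π σ)
    (h_eq : ∀ π σ, d π σ = 0 ↔ π = σ)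
    (h_symm : ∀ π σ, d π σ = d σ π)
    (h_tri : ∀ π σ ω, d π σ ≤ d π ω + d ω σ)
    (h_linv : ∀ η π σ, d (η * π) (η * σ) = d π σ)
    (h_line : ∀ π σ ω : Equiv.Perm (Fin n), d π σ = d π ω + d ω σ ↔ Between π ω σ)
    (h_min : ∀ π σ, 0 < d π σ → 1 ≤ d π σ)
    (h_min1 : ∃ π σ : Equiv.Perm (Fin n), d π σ = 1)
    (γ : Equiv.Perm (Fin n)) :
    d γ 1 = (kendall γ 1 : ℝ) := by
  have hzero : d 1 1 = 0 := (h_eq 1 1).mpr rfl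
  have hstep : ∀ (β : Equiv.Perm (Fin n)) (i : ℕ) (hi : i + 1 < n),
      β ⟨i + 1, hi⟩ < β ⟨i, Nat.lt_of_succ_lt hi⟩ →
      d 1 β = d 1 (β * adjSwap n i) + d 1 (adjSwap n i) := by
    intro β i hi hd
    rw [(h_line 1 β (β * adjSwap n i)).mpr (KAux.between_step β hi hd)]
    congr 1
    have h2 := h_linv (β * adjSwap n i) 1 (adjSwap n i)
    rw [mul_one, mul_assoc, KAux.adjSwap_mul_self, mul_one] at h2
    exact h2
  have hchain : ∀ (X : Equiv.Perm (Fin n)) (j : ℕ) (hj : j + 1 < n),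
      X⁻¹ ⟨j + 1, hj⟩ < X⁻¹ ⟨j, Nat.lt_of_succ_lt hj⟩ →
      d 1 X = d 1 (adjSwap n j) + d 1 (adjSwap n j * X) := by
    intro X j hj hX
    rw [(h_line 1 X (adjSwap n j)).mpr (KAux.between_gen hj hX)]
    congr 1
    have h2 := h_linv (adjSwap n j) 1 (adjSwap n j * X)
    rw [mul_one, ← mul_assoc, KAux.adjSwap_mul_self, one_mul] at h2
    exact h2
  have hpos : ∀ i : ℕ, i + 1 < n → 1 ≤ d 1 (adjSwap n i) := by
    intro i hi
    have hne : adjSwap n i ≠ 1 := by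
      intro hcon
      have h3 := congrArg (fun f : Equiv.Perm (Fin n) => f ⟨i, Nat.lt_of_succ_lt hi⟩) hcon
      simp only [Equiv.Perm.one_apply] at h3
      rw [KAux.adjSwap_eq hi, Equiv.swap_apply_left] at h3
      simp [Fin.ext_iff] at h3
    have h0 : d 1 (adjSwap n i) ≠ 0 := fun hcc => hne ((h_eq 1 _).mp hcc).symm
    exact h_min 1 _ (lt_of_le_of_ne (h_nonneg 1 _) (Ne.symm h0))
  have hadj : ∀ i : ℕ, i + 1 + 1 < n →
      d 1 (adjSwap n i) = d 1 (adjSwap n (i + 1)) := by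
    intro i h2
    have h1 : i + 1 < n := by omega
    have cA : d 1 (adjSwap n i * adjSwap n (i + 1) * adjSwap n i) =
        d 1 (adjSwap n i) + (d 1 (adjSwap n (i + 1)) + d 1 (adjSwap n i)) := by
      rw [hchain _ i h1 (KAux.factA1 h1 h2)]
      congr 1
      have e1 : adjSwap n i * (adjSwap n i * adjSwap n (i + 1) * adjSwap n i) =
          adjSwap n (i + 1) * adjSwap n i := by
        rw [← mul_assoc, ← mul_assoc, KAux.adjSwap_mul_self, one_mul]
      rw [e1, hchain _ (i + 1) h2 (KAux.factA2 h1 h2)]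
      congr 1
      rw [← mul_assoc, KAux.adjSwap_mul_self, one_mul]
    have cB : d 1 (adjSwap n (i + 1) * adjSwap n i * adjSwap n (i + 1)) =
        d 1 (adjSwap n (i + 1)) + (d 1 (adjSwap n i) + d 1 (adjSwap n (i + 1))) := by
      rw [hchain _ (i + 1) h2 (KAux.factB1 h1 h2)]
      congr 1
      have e1 : adjSwap n (i + 1) * (adjSwap n (i + 1) * adjSwap n i * adjSwap n (i + 1)) =
          adjSwap n i * adjSwap n (i + 1) := by
        rw [← mul_assoc, ← mul_assoc, KAux.adjSwap_mul_self, one_mul]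
      rw [e1, hchain _ i h1 (KAux.factB2 h1 h2)]
      congr 1
      rw [← mul_assoc, KAux.adjSwap_mul_self, one_mul]
    rw [KAux.braid (show i + 2 < n by omega)] at cA
    rw [cB] at cA
    linarith
  have hone : ∃ i : ℕ, ∃ hi : i + 1 < n, d 1 (adjSwap n i) = 1 := by
    obtain ⟨π, σ, hps⟩ := h_min1
    have hdb : d 1 (π⁻¹ * σ) = 1 := by
      have h2 := h_linv π 1 (π⁻¹ * σ)
      rw [mul_one, mul_inv_cancel_left] at h2
      rw [← h2]
      exact hps
    have hne : π⁻¹ * σ ≠ 1 := by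
      intro hcon
      rw [hcon, hzero] at hdb
      norm_num at hdb
    obtain ⟨i, hi, hd⟩ := KAux.exists_descent hne
    have h3 := hstep (π⁻¹ * σ) i hi hd
    have h4 := hpos i hi
    have h5 := h_nonneg 1 ((π⁻¹ * σ) * adjSwap n i)
    rw [h3] at hdb
    exact ⟨i, hi, by linarith⟩
  have hc : ∀ i : ℕ, i + 1 < n → d 1 (adjSwap n i) = 1 := by
    obtain ⟨i0, hi0, e0⟩ := hone
    have hbase : ∀ k : ℕ, k + 1 < n → d 1 (adjSwap n k) = d 1 (adjSwap n 0) := by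
      intro k
      induction k with
      | zero => intro _; rfl
      | succ m ih =>
        intro hk
        rw [← hadj m hk]
        exact ih (by omega)
    intro j hj
    rw [hbase j hj, ← hbase i0 hi0, e0]
  have main : ∀ N : ℕ, ∀ β : Equiv.Perm (Fin n), (invSet 1 β).card = N → d 1 β = (N : ℝ) := by
    intro N
    induction N using Nat.strong_induction_on with
    | _ N ih =>
      intro β hN
      by_cases hβ : β = 1
      · subst hβ
        rw [KAux.invSet_one, Finset.card_empty] at hN
        rw [hzero, ← hN]
        norm_num
      · obtain ⟨i, hi, hd⟩ := KAux.exists_descent hβ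
        have hcard := KAux.invSet_card_step β hi hd
        rw [hN] at hcard
        have hlt : (invSet 1 (β * adjSwap n i)).card < N := by omega
        have hih := ih _ hlt (β * adjSwap n i) rfl
        rw [hstep β i hi hd, hih, hc i hi, ← hcard]
        push_cast
        ring
  rw [h_symm, KAux.kendall_one_eq]
  exact main (invSet 1 γ).card γ rfl
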